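/- Let ĝ and ω̂ be dual quaternions with ‖ω̂‖² < 2/3, and for each natural number k ≥ 1 define B_k := Σ_{i=1}^{k} ω̂^(i−1) · ĝ · ω̂^(k−i). Then B_k converges to the zero dual quaternion as k → ∞. -/

import Mathlib

open Filter

/-- The norm `‖a_r + ε a_d‖ = √(‖a_r‖² + ‖a_d‖²)` of a dual quaternion. -/
noncomputable def dualQuatNorm (x : DualNumber (Quaternion ℝ)) : ℝ :=
  Real.sqrt (‖x.fst‖ ^ 2 + ‖x.snd‖ ^ 2)

lemma dqn_nonneg (x : DualNumber (Quaternion ℝ)) : 0 ≤ dualQuatNorm x :=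
  Real.sqrt_nonneg _

lemma dqn_fst_le (x : DualNumber (Quaternion ℝ)) : ‖x.fst‖ ≤ dualQuatNorm x :=
  calc ‖x.fst‖ = Real.sqrt (‖x.fst‖ ^ 2) := (Real.sqrt_sq (norm_nonneg _)).symm
    _ ≤ dualQuatNorm x := Real.sqrt_le_sqrt (le_add_of_nonneg_right (sq_nonneg _))

lemma dqn_snd_le (x : DualNumber (Quaternion ℝ)) : ‖x.snd‖ ≤ dualQuatNorm x :=
  calc ‖x.snd‖ = Real.sqrt (‖x.snd‖ ^ 2) := (Real.sqrt_sq (norm_nonneg _)).symm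
    _ ≤ dualQuatNorm x := Real.sqrt_le_sqrt (le_add_of_nonneg_left (sq_nonneg _))

lemma dqn_le_add (x : DualNumber (Quaternion ℝ)) :
    dualQuatNorm x ≤ ‖x.fst‖ + ‖x.snd‖ := by
  rw [dualQuatNorm]
  rw [show ‖x.fst‖ + ‖x.snd‖ = Real.sqrt ((‖x.fst‖ + ‖x.snd‖) ^ 2) by
    rw [Real.sqrt_sq (by positivity)]]
  apply Real.sqrt_le_sqrt
  nlinarith [norm_nonneg x.fst, norm_nonneg x.snd]

lemma dqn_mul_le (x y : DualNumber (Quaternion ℝ)) :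
    dualQuatNorm (x * y) ≤ Real.sqrt (3 / 2) * dualQuatNorm x * dualQuatNorm y := by
  have hfst : (x * y).fst = x.fst * y.fst := TrivSqZeroExt.fst_mul x y
  have hsnd : (x * y).snd = x.fst * y.snd + x.snd * y.fst := by
    rw [TrivSqZeroExt.snd_mul]
    simp [MulOpposite.smul_eq_mul_unop]
  set a := ‖x.fst‖ with ha
  set b := ‖x.snd‖ with hb
  set c := ‖y.fst‖ with hc
  set d := ‖y.snd‖ with hd
  have hs : ‖(x * y).snd‖ ≤ a * d + b * c := by
    rw [hsnd]
    calc ‖x.fst * y.snd + x.snd * y.fst‖ ≤ ‖x.fst * y.snd‖ + ‖x.snd * y.fst‖ :=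
          norm_add_le _ _
      _ = a * d + b * c := by rw [norm_mul, norm_mul]
  have key : ‖(x * y).fst‖ ^ 2 + ‖(x * y).snd‖ ^ 2
      ≤ 3 / 2 * ((a ^ 2 + b ^ 2) * (c ^ 2 + d ^ 2)) := by
    rw [hfst, norm_mul]
    have h0 : (0:ℝ) ≤ ‖(x*y).snd‖ := norm_nonneg _
    have ha' : (0:ℝ) ≤ a := norm_nonneg _
    have hb' : (0:ℝ) ≤ b := norm_nonneg _
    have hc' : (0:ℝ) ≤ c := norm_nonneg _
    have hd' : (0:ℝ) ≤ d := norm_nonneg _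
    nlinarith [sq_nonneg (a*d - b*c), sq_nonneg (a*c - b*d), mul_nonneg hb' hd',
      mul_nonneg ha' hd', mul_nonneg hb' hc', sq_nonneg (a*d + b*c - ‖(x*y).snd‖)]
  calc dualQuatNorm (x * y)
      ≤ Real.sqrt (3 / 2 * ((a ^ 2 + b ^ 2) * (c ^ 2 + d ^ 2))) :=
        Real.sqrt_le_sqrt key
    _ = Real.sqrt (3 / 2) * dualQuatNorm x * dualQuatNorm y := by
        rw [Real.sqrt_mul (by norm_num), Real.sqrt_mul (by positivity), dualQuatNorm,
          dualQuatNorm, mul_assoc]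

set_option maxHeartbeats 1600000 in
theorem Bk_tendsto_zero (g ω : DualNumber (Quaternion ℝ))
    (hω : dualQuatNorm ω ^ 2 < 2 / 3) :
    Tendsto
      (fun k : ℕ => dualQuatNorm ((∑ i ∈ Finset.Icc 1 k, ω ^ (i - 1) * g * ω ^ (k - i)) - 0))
      atTop (nhds 0) := by
  set C := Real.sqrt (3 / 2) with hC
  set q := C * dualQuatNorm ω with hq
  have hC0 : (0:ℝ) ≤ C := Real.sqrt_nonneg _
  have hq0 : (0:ℝ) ≤ q := mul_nonneg hC0 (dqn_nonneg ω)
  have hq1 : q < 1 := by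
    have : q ^ 2 < 1 := by
      have hC2 : C ^ 2 = 3 / 2 := Real.sq_sqrt (by norm_num)
      have : q ^ 2 = 3 / 2 * dualQuatNorm ω ^ 2 := by rw [hq, mul_pow, hC2]
      rw [this]; linarith
    nlinarith
  -- right multiplication bound
  have hR : ∀ (x : DualNumber (Quaternion ℝ)) (n : ℕ),
      dualQuatNorm (x * ω ^ n) ≤ dualQuatNorm x * q ^ n := by
    intro x n
    induction n with
    | zero => simp
    | succ n ih =>
      rw [pow_succ, ← mul_assoc]
      calc dualQuatNorm (x * ω ^ n * ω) ≤ C * dualQuatNorm (x * ω ^ n) * dualQuatNorm ω :=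
            dqn_mul_le _ _
        _ ≤ C * (dualQuatNorm x * q ^ n) * dualQuatNorm ω := by
            have := dqn_nonneg ω
            gcongr
        _ = dualQuatNorm x * q ^ (n + 1) := by rw [pow_succ, hq]; ring
  -- left multiplication bound
  have hL : ∀ (n : ℕ), dualQuatNorm (ω ^ n * g) ≤ q ^ n * dualQuatNorm g := by
    intro n
    induction n with
    | zero => simp
    | succ n ih =>
      rw [pow_succ', mul_assoc]
      calc dualQuatNorm (ω * (ω ^ n * g)) ≤ C * dualQuatNorm ω * dualQuatNorm (ω ^ n * g) :=
            dqn_mul_le _ _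
        _ ≤ C * dualQuatNorm ω * (q ^ n * dualQuatNorm g) :=
            mul_le_mul_of_nonneg_left ih (mul_nonneg hC0 (dqn_nonneg ω))
        _ = q ^ (n + 1) * dualQuatNorm g := by rw [pow_succ', hq]; ring
  -- per-term bound
  have hterm : ∀ k i : ℕ, 1 ≤ i → i ≤ k →
      dualQuatNorm (ω ^ (i - 1) * g * ω ^ (k - i)) ≤ dualQuatNorm g * q ^ (k - 1) := by
    intro k i h1 h2
    calc dualQuatNorm (ω ^ (i - 1) * g * ω ^ (k - i))
        ≤ dualQuatNorm (ω ^ (i - 1) * g) * q ^ (k - i) := hR _ _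
      _ ≤ q ^ (i - 1) * dualQuatNorm g * q ^ (k - i) :=
          mul_le_mul_of_nonneg_right (hL _) (pow_nonneg hq0 _)
      _ = dualQuatNorm g * q ^ (k - 1) := by
          rw [mul_comm (q ^ (i-1)), mul_assoc, ← pow_add]
          congr 2
          omega
  -- bound on the sum
  have hsum : ∀ k : ℕ, 1 ≤ k →
      dualQuatNorm (∑ i ∈ Finset.Icc 1 k, ω ^ (i - 1) * g * ω ^ (k - i))
        ≤ 2 * dualQuatNorm g * (((k - 1 : ℕ) : ℝ) + 1) * q ^ (k - 1) := by
    intro k hk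
    set f : ℕ → DualNumber (Quaternion ℝ) := fun i => ω ^ (i - 1) * g * ω ^ (k - i) with hf
    have h1 : dualQuatNorm (∑ i ∈ Finset.Icc 1 k, f i)
        ≤ ∑ i ∈ Finset.Icc 1 k, 2 * dualQuatNorm (f i) := by
      calc dualQuatNorm (∑ i ∈ Finset.Icc 1 k, f i)
          ≤ ‖(∑ i ∈ Finset.Icc 1 k, f i).fst‖ + ‖(∑ i ∈ Finset.Icc 1 k, f i).snd‖ :=
            dqn_le_add _
        _ ≤ (∑ i ∈ Finset.Icc 1 k, ‖(f i).fst‖) + ∑ i ∈ Finset.Icc 1 k, ‖(f i).snd‖ := by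
            rw [TrivSqZeroExt.fst_sum, TrivSqZeroExt.snd_sum]
            exact add_le_add (norm_sum_le _ _) (norm_sum_le _ _)
        _ = ∑ i ∈ Finset.Icc 1 k, (‖(f i).fst‖ + ‖(f i).snd‖) := by
            rw [Finset.sum_add_distrib]
        _ ≤ ∑ i ∈ Finset.Icc 1 k, 2 * dualQuatNorm (f i) := by
            apply Finset.sum_le_sum
            intro i _
            have := dqn_fst_le (f i)
            have := dqn_snd_le (f i)
            linarith
    have h2 : ∑ i ∈ Finset.Icc 1 k, 2 * dualQuatNorm (f i)
        ≤ ∑ i ∈ Finset.Icc 1 k, 2 * (dualQuatNorm g * q ^ (k - 1)) := by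
      apply Finset.sum_le_sum
      intro i hi
      rw [Finset.mem_Icc] at hi
      have := hterm k i hi.1 hi.2
      linarith
    have h3 : ∑ i ∈ Finset.Icc 1 k, 2 * (dualQuatNorm g * q ^ (k - 1))
        = (k : ℝ) * (2 * (dualQuatNorm g * q ^ (k - 1))) := by
      rw [Finset.sum_const, Nat.card_Icc, Nat.add_sub_cancel, nsmul_eq_mul]
    have h4 : ((k : ℝ)) = ((k - 1 : ℕ) : ℝ) + 1 := by
      rw [Nat.cast_sub hk]; ring
    calc dualQuatNorm (∑ i ∈ Finset.Icc 1 k, f i)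
        ≤ (k : ℝ) * (2 * (dualQuatNorm g * q ^ (k - 1))) := by linarith
      _ = 2 * dualQuatNorm g * (((k - 1 : ℕ) : ℝ) + 1) * q ^ (k - 1) := by
          rw [h4]; ring
  -- the upper bound tends to 0
  have hupper : Tendsto (fun n : ℕ => 2 * dualQuatNorm g * ((n : ℝ) + 1) * q ^ n)
      atTop (nhds 0) := by
    have h1 : Tendsto (fun n : ℕ => (n : ℝ) * q ^ n) atTop (nhds 0) :=
      tendsto_self_mul_const_pow_of_lt_one hq0 hq1
    have h2 : Tendsto (fun n : ℕ => q ^ n) atTop (nhds 0) :=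
      tendsto_pow_atTop_nhds_zero_of_lt_one hq0 hq1
    have h3 := (h1.add h2).const_mul (2 * dualQuatNorm g)
    have heq : (fun n : ℕ => 2 * dualQuatNorm g * ((n : ℝ) + 1) * q ^ n)
        = fun n : ℕ => 2 * dualQuatNorm g * ((n : ℝ) * q ^ n + q ^ n) := by
      funext n; ring
    rw [heq]
    convert h3 using 1
    norm_num
  have hcomp : Tendsto (fun k : ℕ => 2 * dualQuatNorm g * (((k - 1 : ℕ) : ℝ) + 1) * q ^ (k - 1))
      atTop (nhds 0) := hupper.comp (tendsto_sub_atTop_nat 1)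
  apply tendsto_of_tendsto_of_tendsto_of_le_of_le' tendsto_const_nhds hcomp
  · filter_upwards with k
    rw [sub_zero]
    exact dqn_nonneg _
  · filter_upwards [eventually_ge_atTop 1] with k hk
    rw [sub_zero]
    exact hsum k hk
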